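/- arXiv:1410.2654 — 4 statements merged into one kernel-verified Lean document; each statement's English description precedes it below -/
import Mathlib

section
/- Let H be a real Hilbert space, let α₁, α₂ ∈ (0,1), and let T₁, T₂ : H → H be α₁-averaged and α₂-averaged operators respectively (i.e., Tᵢ = (1−αᵢ)I + αᵢNᵢ for some nonexpansive Nᵢ : H → H). Let z* be a fixed point of T₁ ∘ T₂ and set α₁₂ := (α₁ + α₂ − 2α₁α₂)/(1 − α₁α₂). Let ε ∈ (0,1), let z⁰ ∈ H, let (λ_k)_{k≥0} ⊆ (0, (1−ε)(1+εα₁₂)/α₁₂), and define z^{k+1} := (1 − λ_k)z^k + λ_k (T₁ ∘ T₂)(z^k) for all k ≥ 0. Then Σ_{i=0}^∞ λ_i ‖(I − T₂)(z^i) − (I − T₂)(z*)‖² ≤ α₂(1 + 1/ε)‖z⁰ − z*‖² / (1 − α₂). -/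
lemma combo_sq {H : Type*} [NormedAddCommGroup H] [InnerProductSpace ℝ H]
    (a b : H) (t : ℝ) :
    ‖(1 - t) • a + t • b‖ ^ 2
      = (1 - t) * ‖a‖ ^ 2 + t * ‖b‖ ^ 2 - t * (1 - t) * ‖a - b‖ ^ 2 := by
  have h : ∀ v : H, ‖v‖ ^ 2 = inner ℝ v v := fun v => (real_inner_self_eq_norm_sq v).symm
  rw [h, h, h, h]
  simp only [inner_add_left, inner_add_right, inner_sub_left, inner_sub_right,
    real_inner_smul_left, real_inner_smul_right, real_inner_comm a b]
  ring

lemma averaged_ineq {H : Type*} [NormedAddCommGroup H] [InnerProductSpace ℝ H]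
    {α : ℝ} (hα : α ∈ Set.Ioo (0:ℝ) 1) {T N : H → H} (hN : LipschitzWith 1 N)
    (hT : ∀ x, T x = (1 - α) • x + α • N x) (x y : H) :
    ‖T x - T y‖ ^ 2 ≤ ‖x - y‖ ^ 2 - ((1 - α) / α) * ‖(x - T x) - (y - T y)‖ ^ 2 := by
  obtain ⟨hα0, hα1⟩ := hα
  have hTsub : T x - T y = (1 - α) • (x - y) + α • (N x - N y) := by
    rw [hT, hT]; rw [smul_sub, smul_sub]; abel
  have hres : (x - T x) - (y - T y) = α • ((x - y) - (N x - N y)) := by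
    rw [hT, hT]
    module
  have hNle : ‖N x - N y‖ ≤ ‖x - y‖ := by
    have := hN.dist_le_mul x y
    simpa [dist_eq_norm] using this
  rw [hTsub, combo_sq, hres, norm_smul]
  rw [Real.norm_eq_abs, abs_of_pos hα0]
  have hd : (0:ℝ) ≤ ‖x - y - (N x - N y)‖ ^ 2 := sq_nonneg _
  have hb : ‖N x - N y‖ ^ 2 ≤ ‖x - y‖ ^ 2 := by
    nlinarith [norm_nonneg (N x - N y), norm_nonneg (x - y)]
  have hdiv : (1 - α) / α * (α * ‖x - y - (N x - N y)‖) ^ 2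
      = α * (1 - α) * ‖x - y - (N x - N y)‖ ^ 2 := by
    field_simp
  rw [hdiv]
  nlinarith

lemma lam_bound_aux {A B ε l : ℝ} (hA : 0 < A) (hB : 0 < B) (hε0 : 0 < ε) (hε1 : ε < 1)
    (h : l ≤ (1 - ε) * ((A + B + A * B) / (A + B) + ε)) :
    l - 1 ≤ A * B / (A + (1 + ε) * B) := by
  set s := A * B / (A + B) with hs
  have hAB : 0 < A + B := by linarith
  have hden : 0 < A + (1 + ε) * B := by nlinarith
  have h1 : (A + B + A * B) / (A + B) = 1 + s := by
    rw [hs]; field_simp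
  have hspos : 0 < s := div_pos (mul_pos hA hB) hAB
  have hc : s / (1 + ε) ≤ A * B / (A + (1 + ε) * B) := by
    rw [hs, div_div, div_le_div_iff₀ (by positivity) hden]
    nlinarith [mul_pos (mul_pos hA hB) hA]
  have h2 : l - 1 ≤ s - ε * s - ε ^ 2 := by rw [h1] at h; nlinarith
  have h3 : s - ε * s - ε ^ 2 ≤ s / (1 + ε) := by
    rw [le_div_iff₀ (by linarith)]
    nlinarith [mul_pos (mul_pos hε0 hε0) hspos]
  linarith
lemma quad_split {p q x y w : ℝ} (hp : 0 < p) (hq : 0 < q) (hx : 0 ≤ x) (hy : 0 ≤ y)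
    (hw : 0 ≤ w) (hwxy : w ≤ x + y) :
    p * q / (p + q) * w ^ 2 ≤ p * x ^ 2 + q * y ^ 2 := by
  rw [div_mul_eq_mul_div, div_le_iff₀ (by linarith)]
  nlinarith [sq_nonneg (p * x - q * y), mul_pos hp hq,
    mul_le_mul hwxy hwxy hw (by linarith : (0:ℝ) ≤ x + y)]


set_option maxHeartbeats 1000000

/-- summability bound for compositions of averaged operators. -/
theorem averaged_composition_gradient_sum
    {H : Type*} [NormedAddCommGroup H] [InnerProductSpace ℝ H]
    (α₁ α₂ : ℝ) (hα₁ : α₁ ∈ Set.Ioo (0 : ℝ) 1) (hα₂ : α₂ ∈ Set.Ioo (0 : ℝ) 1)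
    (T₁ T₂ : H → H)
    (h₁ : ∃ N : H → H, LipschitzWith 1 N ∧ ∀ x, T₁ x = (1 - α₁) • x + α₁ • N x)
    (h₂ : ∃ N : H → H, LipschitzWith 1 N ∧ ∀ x, T₂ x = (1 - α₂) • x + α₂ • N x)
    (zs : H) (hzs : T₁ (T₂ zs) = zs)
    (α₁₂ : ℝ) (hα₁₂ : α₁₂ = (α₁ + α₂ - 2 * α₁ * α₂) / (1 - α₁ * α₂))
    (ε : ℝ) (hε : ε ∈ Set.Ioo (0 : ℝ) 1)
    (lam : ℕ → ℝ)
    (hlam : ∀ k, lam k ∈ Set.Ioo (0 : ℝ) ((1 - ε) * (1 + ε * α₁₂) / α₁₂))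
    (z : ℕ → H)
    (hz : ∀ k, z (k + 1) = (1 - lam k) • z k + lam k • T₁ (T₂ (z k))) :
    ∀ n : ℕ, ∑ i ∈ Finset.range n, lam i * ‖(z i - T₂ (z i)) - (zs - T₂ zs)‖ ^ 2
      ≤ α₂ * (1 + 1 / ε) * ‖z 0 - zs‖ ^ 2 / (1 - α₂) := by
  obtain ⟨N₁, hN₁, hT₁⟩ := h₁
  obtain ⟨N₂, hN₂, hT₂⟩ := h₂
  obtain ⟨hα₁0, hα₁1⟩ := hα₁
  obtain ⟨hα₂0, hα₂1⟩ := hα₂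
  obtain ⟨hε0, hε1⟩ := hε
  have hα₁' : α₁ ∈ Set.Ioo (0:ℝ) 1 := ⟨hα₁0, hα₁1⟩
  have hα₂' : α₂ ∈ Set.Ioo (0:ℝ) 1 := ⟨hα₂0, hα₂1⟩
  set A : ℝ := (1 - α₂) / α₂ with hAdef
  set B : ℝ := (1 - α₁) / α₁ with hBdef
  have hApos : 0 < A := div_pos (by linarith) hα₂0
  have hBpos : 0 < B := div_pos (by linarith) hα₁0
  set β : ℝ := ε / (1 + ε) * A with hβdef
  have hβpos : 0 < β := by positivity
  set p : ℝ := A / (1 + ε) with hpdef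
  have hppos : 0 < p := by positivity
  have hβp : β + p = A := by rw [hβdef, hpdef]; field_simp; ring
  -- rewrite α₁₂ in terms of A, B
  have hABne : A + B + A * B ≠ 0 := by positivity
  have hA12 : α₁₂ = (A + B) / (A + B + A * B) := by
    rw [hα₁₂, hAdef, hBdef]
    have h1 : (1:ℝ) - α₁ * α₂ ≠ 0 := by nlinarith
    rw [div_eq_div_iff h1 (by positivity)]
    field_simp
    ring
  have hbndeq : (1 - ε) * (1 + ε * α₁₂) / α₁₂
      = (1 - ε) * ((A + B + A * B) / (A + B) + ε) := by
    rw [hA12]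
    have h1 : A + B ≠ 0 := by positivity
    field_simp
    try ring
  -- the key one-step inequality
  have key : ∀ k, ‖z (k + 1) - zs‖ ^ 2
      + lam k * (β * ‖(z k - T₂ (z k)) - (zs - T₂ zs)‖ ^ 2) ≤ ‖z k - zs‖ ^ 2 := by
    intro k
    obtain ⟨hl0, hl1⟩ := hlam k
    have h2 := averaged_ineq hα₂' hN₂ hT₂ (z k) zs
    have h1 := averaged_ineq hα₁' hN₁ hT₁ (T₂ (z k)) (T₂ zs)
    rw [hzs] at h1
    rw [show (1 - α₂) / α₂ = A from hAdef.symm] at h2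
    rw [show (1 - α₁) / α₁ = B from hBdef.symm] at h1
    have hz1 : z (k + 1) - zs
        = (1 - lam k) • (z k - zs) + lam k • (T₁ (T₂ (z k)) - zs) := by
      rw [hz k]; module
    have hac : z k - zs - (T₁ (T₂ (z k)) - zs)
        = (z k - T₂ (z k) - (zs - T₂ zs))
          + (T₂ (z k) - T₁ (T₂ (z k)) - (T₂ zs - zs)) := by abel
    rw [hz1, combo_sq, hac]
    set l : ℝ := lam k with hldef
    set x : ℝ := ‖z k - T₂ (z k) - (zs - T₂ zs)‖ with hxdef
    set y : ℝ := ‖T₂ (z k) - T₁ (T₂ (z k)) - (T₂ zs - zs)‖ with hydef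
    set w : ℝ := ‖(z k - T₂ (z k) - (zs - T₂ zs))
        + (T₂ (z k) - T₁ (T₂ (z k)) - (T₂ zs - zs))‖ with hwdef
    have hw : w ≤ x + y := norm_add_le _ _
    have hlb : l - 1 ≤ A * B / (A + (1 + ε) * B) := by
      apply lam_bound_aux hApos hBpos hε0 hε1
      rw [← hbndeq]; exact hl1.le
    have hpB : A * B / (A + (1 + ε) * B) = p * B / (p + B) := by
      rw [hpdef]
      have : (1:ℝ) + ε ≠ 0 := by linarith
      field_simp
      try ring
    rw [hpB] at hlb
    have hquad := quad_split hppos hBpos (hxdef ▸ norm_nonneg _) (hydef ▸ norm_nonneg _)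
      (hwdef ▸ norm_nonneg _) hw
    have hstep : (l - 1) * w ^ 2 ≤ p * x ^ 2 + B * y ^ 2 := by
      calc (l - 1) * w ^ 2 ≤ p * B / (p + B) * w ^ 2 :=
            mul_le_mul_of_nonneg_right hlb (sq_nonneg _)
        _ ≤ p * x ^ 2 + B * y ^ 2 := hquad
    have hAx : A * x ^ 2 = β * x ^ 2 + p * x ^ 2 := by rw [← hβp]; ring
    have hmain : ‖T₁ (T₂ (z k)) - zs‖ ^ 2 + (l - 1) * w ^ 2 + β * x ^ 2
        - ‖z k - zs‖ ^ 2 ≤ 0 := by linarith [h1, h2, hstep, hAx]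
    calc (1 - l) * ‖z k - zs‖ ^ 2 + l * ‖T₁ (T₂ (z k)) - zs‖ ^ 2
          - l * (1 - l) * w ^ 2 + l * (β * x ^ 2)
        = ‖z k - zs‖ ^ 2 + l * (‖T₁ (T₂ (z k)) - zs‖ ^ 2 + (l - 1) * w ^ 2
            + β * x ^ 2 - ‖z k - zs‖ ^ 2) := by ring
      _ ≤ ‖z k - zs‖ ^ 2 := by
          nlinarith [mul_nonpos_of_nonneg_of_nonpos hl0.le hmain]
  -- telescoping
  have tele : ∀ n, ∑ i ∈ Finset.range n,
      lam i * (β * ‖(z i - T₂ (z i)) - (zs - T₂ zs)‖ ^ 2) + ‖z n - zs‖ ^ 2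
      ≤ ‖z 0 - zs‖ ^ 2 := by
    intro n
    induction n with
    | zero => simp
    | succ n ih =>
      rw [Finset.sum_range_succ]
      have := key n
      linarith
  intro n
  have hsum : β * ∑ i ∈ Finset.range n,
      lam i * ‖(z i - T₂ (z i)) - (zs - T₂ zs)‖ ^ 2
      = ∑ i ∈ Finset.range n,
        lam i * (β * ‖(z i - T₂ (z i)) - (zs - T₂ zs)‖ ^ 2) := by
    rw [Finset.mul_sum]
    exact Finset.sum_congr rfl (fun i _ => by ring)
  have h0 : β * ∑ i ∈ Finset.range n,
      lam i * ‖(z i - T₂ (z i)) - (zs - T₂ zs)‖ ^ 2 ≤ ‖z 0 - zs‖ ^ 2 := by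
    rw [hsum]
    have := tele n
    nlinarith [sq_nonneg ‖z n - zs‖]
  have hrhs : β * (α₂ * (1 + 1 / ε) * ‖z 0 - zs‖ ^ 2 / (1 - α₂)) = ‖z 0 - zs‖ ^ 2 := by
    rw [hβdef, hAdef]
    have h1 : (1:ℝ) - α₂ ≠ 0 := by linarith
    have h2 : (1:ℝ) + ε ≠ 0 := by linarith
    field_simp
    try ring
  exact le_of_mul_le_mul_left (by rw [hrhs]; exact h0) hβpos
end

section
/- If γ ∈ (0, 2β_V), then the FDRS operator T is α-averaged with α = 2β_V/(4β_V − γ); that is, there exists a nonexpansive map N : H → H such that T = (1 − α)I + αN. -/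
open scoped RealInnerProductSpace
open Filter Set Topology

section FdrsAux
variable {H : Type*} [NormedAddCommGroup H] [InnerProductSpace ℝ H]

lemma fdrs_norm_smul_add_smul_sq (r s : ℝ) (A B : H) :
    ‖r • A + s • B‖ ^ 2 = r ^ 2 * ‖A‖ ^ 2 + 2 * (r * s) * ⟪A, B⟫ + s ^ 2 * ‖B‖ ^ 2 := by
  rw [norm_add_sq_real, real_inner_smul_left, real_inner_smul_right, norm_smul, norm_smul,
    Real.norm_eq_abs, Real.norm_eq_abs, mul_pow, mul_pow, sq_abs, sq_abs]
  ring

lemma fdrs_prox_subgrad {f : H → ℝ} {γ : ℝ} (hγ : 0 < γ)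
    (hfconv : ConvexOn ℝ Set.univ f) {x p : H}
    (hmin : IsMinOn (fun y => f y + (1 / (2 * γ)) * ‖y - x‖ ^ 2) Set.univ p) (w : H) :
    ⟪x - p, w - p⟫ ≤ γ * (f w - f p) := by
  set u := w - p with hu
  have hkey : ∀ t : ℝ, 0 < t → t ≤ 1 → ⟪x - p, u⟫ ≤ γ * (f w - f p) + t * (‖u‖ ^ 2 / 2) := by
    intro t ht0 ht1
    have hmin' : f p + (1 / (2 * γ)) * ‖p - x‖ ^ 2
        ≤ f (p + t • u) + (1 / (2 * γ)) * ‖p + t • u - x‖ ^ 2 :=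
      isMinOn_iff.mp hmin _ (Set.mem_univ _)
    have hcvx : f (p + t • u) ≤ (1 - t) * f p + t * f w := by
      have h1 := hfconv.2 (Set.mem_univ p) (Set.mem_univ w) (by linarith : (0:ℝ) ≤ 1 - t)
        ht0.le (by ring : (1 - t) + t = 1)
      have hpt : (1 - t) • p + t • w = p + t • u := by rw [hu]; module
      rwa [hpt] at h1
    have hnorm : ‖p + t • u - x‖ ^ 2 = ‖p - x‖ ^ 2 + 2 * t * ⟪p - x, u⟫ + t ^ 2 * ‖u‖ ^ 2 := by
      have h2 : p + t • u - x = (p - x) + t • u := by abel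
      rw [h2, norm_add_sq_real, real_inner_smul_right, norm_smul, Real.norm_eq_abs, mul_pow,
        sq_abs]
      ring
    rw [hnorm] at hmin'
    have hflip : ⟪p - x, u⟫ = -⟪x - p, u⟫ := by
      rw [← inner_neg_left, neg_sub]
    rw [hflip] at hmin'
    have hγ' : γ ≠ 0 := ne_of_gt hγ
    have ht' : t ≠ 0 := ne_of_gt ht0
    have hbase : 0 ≤ t * f w - t * f p
        + (1 / (2 * γ)) * (2 * t * (-⟪x - p, u⟫) + t ^ 2 * ‖u‖ ^ 2) := by
      nlinarith [hmin', hcvx]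
    have heq : (γ / t) * (t * f w - t * f p
        + (1 / (2 * γ)) * (2 * t * (-⟪x - p, u⟫) + t ^ 2 * ‖u‖ ^ 2))
        = γ * (f w - f p) - ⟪x - p, u⟫ + t * (‖u‖ ^ 2 / 2) := by
      field_simp
      ring
    have hmul := mul_nonneg (le_of_lt (div_pos hγ ht0)) hbase
    rw [heq] at hmul
    linarith
  have hfin : ∀ ε : ℝ, 0 < ε → ⟪x - p, u⟫ - ε ≤ γ * (f w - f p) := by
    intro ε hε
    have hX : (0:ℝ) < ‖u‖ ^ 2 + 1 := by positivity
    set t := min 1 (ε / (‖u‖ ^ 2 + 1)) with htdef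
    have ht0 : 0 < t := lt_min one_pos (div_pos hε hX)
    have ht1 : t ≤ 1 := min_le_left _ _
    have ht2 : t ≤ ε / (‖u‖ ^ 2 + 1) := min_le_right _ _
    have h4 : t * (‖u‖ ^ 2 + 1) ≤ ε := (le_div_iff₀ hX).mp ht2
    have h5 := hkey t ht0 ht1
    nlinarith [mul_nonneg ht0.le (sq_nonneg ‖u‖)]
  linarith [le_of_forall_sub_le hfin]

lemma fdrs_prox_firm {f : H → ℝ} {γ : ℝ} (hγ : 0 < γ)
    (hfconv : ConvexOn ℝ Set.univ f) {proxf : H → H}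
    (hprox : ∀ x, IsMinOn (fun y => f y + (1 / (2 * γ)) * ‖y - x‖ ^ 2) Set.univ (proxf x))
    (x y : H) :
    ‖proxf x - proxf y‖ ^ 2 ≤ ⟪proxf x - proxf y, x - y⟫ := by
  have h1 := fdrs_prox_subgrad hγ hfconv (hprox x) (proxf y)
  have h2 := fdrs_prox_subgrad hγ hfconv (hprox y) (proxf x)
  set p := proxf x
  set q := proxf y
  rw [← real_inner_self_eq_norm_sq]
  simp only [inner_sub_left, inner_sub_right] at h1 h2 ⊢
  have c1 := real_inner_comm p q
  have c2 := real_inner_comm x p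
  have c3 := real_inner_comm x q
  have c4 := real_inner_comm y p
  have c5 := real_inner_comm y q
  nlinarith [h1, h2, hγ]

lemma fdrs_half_averaged {S Q : H → H} (hSQ : ∀ w, S w = (1/2 : ℝ) • w + (1/2 : ℝ) • Q w)
    (hQ : ∀ a b, ‖Q a - Q b‖ ^ 2 ≤ ‖a - b‖ ^ 2) (a b : H) :
    ‖S a - S b‖ ^ 2 ≤ ‖a - b‖ ^ 2 - ‖(a - S a) - (b - S b)‖ ^ 2 := by
  have h1 : S a - S b = (1/2 : ℝ) • (a - b) + (1/2 : ℝ) • (Q a - Q b) := by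
    rw [hSQ a, hSQ b]; module
  have h2 : (a - S a) - (b - S b) = (1/2 : ℝ) • (a - b) + (-(1/2) : ℝ) • (Q a - Q b) := by
    rw [hSQ a, hSQ b]; module
  rw [h1, h2, fdrs_norm_smul_add_smul_sq, fdrs_norm_smul_add_smul_sq]
  nlinarith [hQ a b]

end FdrsAux

section FdrsGrad
variable {H : Type*} [NormedAddCommGroup H] [InnerProductSpace ℝ H] [CompleteSpace H]

omit [CompleteSpace H] in
lemma fdrs_line_hasDerivAt (x u : H) (t : ℝ) :
    HasDerivAt (fun s : ℝ => x + s • u) u t := by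
  simpa using ((hasDerivAt_id t).smul_const u).const_add x

lemma fdrs_comp_line_hasDerivAt {h : H → ℝ} {G : H → H}
    (hdiff : ∀ z, HasGradientAt h (G z) z) (x u : H) (t : ℝ) :
    HasDerivAt (fun s : ℝ => h (x + s • u)) ⟪G (x + t • u), u⟫ t := by
  have hc := fdrs_line_hasDerivAt x u t
  have := (hasGradientAt_iff_hasFDerivAt.mp (hdiff (x + t • u))).comp_hasDerivAt t hc
  simpa [InnerProductSpace.toDual_apply_apply, Function.comp_def] using this

lemma fdrs_descent_lemma {h : H → ℝ} {G : H → H} {β : ℝ} (hβ : 0 < β)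
    (hdiff : ∀ z, HasGradientAt h (G z) z)
    (hlip : ∀ a b, ‖G a - G b‖ ≤ (1 / β) * ‖a - b‖) (x y : H) :
    h y ≤ h x + ⟪G x, y - x⟫ + (1 / (2 * β)) * ‖y - x‖ ^ 2 := by
  set u := y - x with hu
  set φ : ℝ → ℝ := fun t => h (x + t • u) - t * ⟪G x, u⟫ - t ^ 2 * (‖u‖ ^ 2 / (2 * β)) with hφ
  have hφd : ∀ t : ℝ, HasDerivAt φ (⟪G (x + t • u), u⟫ - ⟪G x, u⟫ - t * (‖u‖ ^ 2 / β)) t := by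
    intro t
    have h1 := fdrs_comp_line_hasDerivAt hdiff x u t
    have h2 : HasDerivAt (fun s : ℝ => s * ⟪G x, u⟫) ⟪G x, u⟫ t := hasDerivAt_mul_const _
    have h3 : HasDerivAt (fun s : ℝ => s ^ 2 * (‖u‖ ^ 2 / (2 * β)))
        ((2 * t ^ 1) * (‖u‖ ^ 2 / (2 * β))) t := by
      simpa using (hasDerivAt_pow 2 t).mul_const (‖u‖ ^ 2 / (2 * β))
    have h4 := (h1.sub h2).sub h3
    convert h4 using 1
    have hβ' : β ≠ 0 := ne_of_gt hβ
    all_goals try rfl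
    ring
  have hdiffφ : Differentiable ℝ φ := fun t => (hφd t).differentiableAt
  have hmono : AntitoneOn φ (Icc 0 1) := by
    apply antitoneOn_of_deriv_nonpos (convex_Icc 0 1) hdiffφ.continuous.continuousOn
      hdiffφ.differentiableOn
    intro t ht
    rw [interior_Icc] at ht
    rw [(hφd t).deriv]
    have hsub : ⟪G (x + t • u) - G x, u⟫ = ⟪G (x + t • u), u⟫ - ⟪G x, u⟫ := inner_sub_left _ _ _
    have hcs : ⟪G (x + t • u) - G x, u⟫ ≤ ‖G (x + t • u) - G x‖ * ‖u‖ := real_inner_le_norm _ _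
    have hl := hlip (x + t • u) x
    have hnn : ‖x + t • u - x‖ = t * ‖u‖ := by
      rw [add_sub_cancel_left, norm_smul, Real.norm_eq_abs, abs_of_pos ht.1]
    rw [hnn] at hl
    have hmul := mul_le_mul_of_nonneg_right hl (norm_nonneg u)
    have hr : 1 / β * (t * ‖u‖) * ‖u‖ = t * (‖u‖ ^ 2 / β) := by ring
    nlinarith [hmul, hcs, hsub, hr]
  have h01 := hmono (left_mem_Icc.mpr zero_le_one) (right_mem_Icc.mpr zero_le_one) zero_le_one
  have hφ0 : φ 0 = h x := by simp [hφ]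
  have hφ1 : φ 1 = h y - ⟪G x, u⟫ - ‖u‖ ^ 2 / (2 * β) := by
    simp [hφ, hu]
  rw [hφ0, hφ1] at h01
  have : (1 / (2 * β)) * ‖u‖ ^ 2 = ‖u‖ ^ 2 / (2 * β) := by ring
  linarith

lemma fdrs_grad_convex_ineq {h : H → ℝ} {G : H → H}
    (hconv : ConvexOn ℝ Set.univ h) (hdiff : ∀ z, HasGradientAt h (G z) z) (x y : H) :
    h x + ⟪G x, y - x⟫ ≤ h y := by
  set u := y - x with hu
  set ψ : ℝ → ℝ := fun t => h (x + t • u) with hψ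
  have hψ0 : HasDerivAt ψ ⟪G x, u⟫ 0 := by
    have := fdrs_comp_line_hasDerivAt hdiff x u 0
    simpa using this
  have hslope : Tendsto (slope ψ 0) (𝓝[>] 0) (𝓝 ⟪G x, u⟫) :=
    (hasDerivAt_iff_tendsto_slope.mp hψ0).mono_left
      (nhdsWithin_mono 0 (fun t ht => ne_of_gt ht))
  have hbound : ∀ᶠ t in 𝓝[>] (0:ℝ), slope ψ 0 t ≤ h y - h x := by
    filter_upwards [Ioo_mem_nhdsGT_of_mem (by norm_num : (0:ℝ) ∈ Ico (0:ℝ) 1)] with t ht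
    have hcvx : h ((1 - t) • x + t • y) ≤ (1 - t) * h x + t * h y :=
      hconv.2 (mem_univ x) (mem_univ y) (by linarith [ht.2] : (0:ℝ) ≤ 1 - t) ht.1.le
        (by ring)
    have hpt : (1 - t) • x + t • y = x + t • u := by rw [hu]; module
    rw [hpt] at hcvx
    rw [slope_def_field]
    have hψz : ψ 0 = h x := by simp [hψ]
    have hψt : ψ t = h (x + t • u) := rfl
    rw [hψz, hψt, sub_zero, div_le_iff₀ ht.1]
    nlinarith [hcvx]
  have hle : ⟪G x, u⟫ ≤ h y - h x := le_of_tendsto hslope hbound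
  linarith

lemma fdrs_cocoercive {h : H → ℝ} {G : H → H} {β : ℝ} (hβ : 0 < β)
    (hconv : ConvexOn ℝ Set.univ h)
    (hdiff : ∀ z, HasGradientAt h (G z) z)
    (hlip : ∀ a b, ‖G a - G b‖ ≤ (1 / β) * ‖a - b‖) (x y : H) :
    β * ‖G x - G y‖ ^ 2 ≤ ⟪G x - G y, x - y⟫ := by
  have key : ∀ a b : H, h a + ⟪G a, b - a⟫ + (β / 2) * ‖G b - G a‖ ^ 2 ≤ h b := by
    intro a b
    set d := G b - G a with hd
    set z := b - β • d with hz
    have h1 := fdrs_descent_lemma hβ hdiff hlip b z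
    have h2 := fdrs_grad_convex_ineq hconv hdiff a z
    have hzb : z - b = -(β • d) := by rw [hz]; abel
    have he1 : ⟪G b, z - b⟫ = -(β * ⟪G b, d⟫) := by
      rw [hzb, inner_neg_right, real_inner_smul_right]
    have he2 : ‖z - b‖ ^ 2 = β ^ 2 * ‖d‖ ^ 2 := by
      rw [hzb, norm_neg, norm_smul, Real.norm_eq_abs, mul_pow, sq_abs]
    have hza : z - a = (b - a) - β • d := by rw [hz]; abel
    have he3 : ⟪G a, z - a⟫ = ⟪G a, b - a⟫ - β * ⟪G a, d⟫ := by
      rw [hza, inner_sub_right, real_inner_smul_right]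
    have he4 : β * ⟪G b, d⟫ - β * ⟪G a, d⟫ = β * ‖d‖ ^ 2 := by
      rw [← mul_sub, ← inner_sub_left, ← hd, real_inner_self_eq_norm_sq]
    rw [he1, he2] at h1
    rw [he3] at h2
    have harith : (1 / (2 * β)) * (β ^ 2 * ‖d‖ ^ 2) = (β / 2) * ‖d‖ ^ 2 := by
      field_simp
    linarith
  have k1 := key x y
  have k2 := key y x
  have hns : ‖G y - G x‖ = ‖G x - G y‖ := norm_sub_rev _ _
  rw [hns] at k1
  have hi1 : ⟪G x, y - x⟫ - ⟪G y, y - x⟫ = ⟪G x - G y, y - x⟫ := (inner_sub_left _ _ _).symm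
  have hi2 : ⟪G x - G y, y - x⟫ = -⟪G x - G y, x - y⟫ := by
    rw [← neg_sub x y, inner_neg_right]
  have hi3 : ⟪G y, x - y⟫ = -⟪G y, y - x⟫ := by
    rw [← neg_sub y x, inner_neg_right]
  rw [hi3] at k2
  linarith

end FdrsGrad

lemma fdrs_young_comb (βV γ P Q ip : ℝ) (hβV : 0 < βV) (h1 : 0 < γ) (h2 : γ < 2 * βV)
    (hip : ip ≤ P * Q) :
    ((2 * βV - γ) / (2 * βV)) * (P ^ 2 + 2 * ip + Q ^ 2)
      ≤ ((2 * βV - γ) / γ) * P ^ 2 + Q ^ 2 := by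
  have h3 : (0:ℝ) < 2 * βV - γ := by linarith
  have hb2 : (0:ℝ) < 2 * βV := by linarith
  have hκ : (0:ℝ) < (2 * βV - γ) / (2 * βV) := by positivity
  have step : ((2 * βV - γ) / (2 * βV)) * (P ^ 2 + 2 * ip + Q ^ 2)
      ≤ ((2 * βV - γ) / (2 * βV)) * (P ^ 2 + 2 * (P * Q) + Q ^ 2) := by
    apply mul_le_mul_of_nonneg_left _ hκ.le
    linarith
  refine step.trans ?_
  have key : (2 * βV - γ) * γ * (P ^ 2 + 2 * (P * Q) + Q ^ 2)
      ≤ ((2 * βV - γ) * (2 * βV)) * P ^ 2 + (2 * βV * γ) * Q ^ 2 := by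
    nlinarith [sq_nonneg ((2 * βV - γ) * P - γ * Q)]
  rw [← sub_nonneg]
  have hfs : ((2 * βV - γ) / γ) * P ^ 2 + Q ^ 2
      - ((2 * βV - γ) / (2 * βV)) * (P ^ 2 + 2 * (P * Q) + Q ^ 2)
      = (((2 * βV - γ) * (2 * βV)) * P ^ 2 + (2 * βV * γ) * Q ^ 2
        - (2 * βV - γ) * γ * (P ^ 2 + 2 * (P * Q) + Q ^ 2)) / (2 * βV * γ) := by
    field_simp
  rw [hfs]
  exact div_nonneg (by linarith) (by positivity)

/-- If γ ∈ (0, 2β_V), then the FDRS operator T is α-averaged with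
α = 2β_V/(4β_V − γ); i.e., there is a nonexpansive N with T = (1 − α)I + αN. -/
theorem fdrs_operator_averaged
    {H : Type*} [NormedAddCommGroup H] [InnerProductSpace ℝ H] [CompleteSpace H]
    (V : Submodule ℝ H) [CompleteSpace V]
    (PV : H → H) (hPV : ∀ x, PV x = (V.orthogonalProjection x : H))
    (f g : H → ℝ) (gradg gradh proxf : H → H)
    (β βV γ : ℝ) (hβ : 0 < β) (hβV : 0 < βV)
    (hγ : γ ∈ Set.Ioo (0 : ℝ) (2 * βV))
    (hfconv : ConvexOn ℝ Set.univ f) (hfcont : Continuous f)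
    (hgconv : ConvexOn ℝ Set.univ g)
    (hgdiff : ∀ x, HasGradientAt g (gradg x) x)
    (hglip : LipschitzWith (1 / β).toNNReal gradg)
    (hgradh : ∀ x, gradh x = PV (gradg (PV x)))
    (hgradhlip : LipschitzWith (1 / βV).toNNReal gradh)
    (hprox : ∀ x, IsMinOn (fun y => f y + (1 / (2 * γ)) * ‖y - x‖ ^ 2) Set.univ (proxf x))
    (T : H → H)
    (hT : ∀ z, T z = (1 / 2 : ℝ) • (z - γ • gradh z)
        + (1 / 2 : ℝ) • ((2 : ℝ) • proxf ((2 : ℝ) • PV (z - γ • gradh z) - (z - γ • gradh z))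
            - ((2 : ℝ) • PV (z - γ • gradh z) - (z - γ • gradh z)))) :
    ∃ N : H → H, LipschitzWith 1 N ∧
      ∀ z, T z = (1 - 2 * βV / (4 * βV - γ)) • z + (2 * βV / (4 * βV - γ)) • N z := by
  obtain ⟨hγ0, hγ2⟩ := hγ
  have hβV2 : (0:ℝ) < 2 * βV := by linarith
  have h4γ : (0:ℝ) < 4 * βV - γ := by linarith
  have h2γ : (0:ℝ) < 2 * βV - γ := by linarith
  -- the projection as a continuous linear map
  set Pc : H →L[ℝ] H := V.subtypeL.comp (V.orthogonalProjection) with hPcdef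
  have hPc : ∀ x, PV x = Pc x := fun x => by rw [hPV]; rfl
  -- convexity of h = g ∘ P_V
  have hconvh : ConvexOn ℝ Set.univ (fun z => g (PV z)) := by
    refine ⟨convex_univ, fun z₁ _ z₂ _ s t hs ht hst => ?_⟩
    simp only
    rw [hPc, hPc z₁, hPc z₂, map_add, map_smul, map_smul]
    exact hgconv.2 (Set.mem_univ _) (Set.mem_univ _) hs ht hst
  -- gradient of h
  have hdiffh : ∀ z, HasGradientAt (fun w => g (PV w)) (gradh z) z := by
    intro z
    have hcomp : HasFDerivAt (fun w => g (Pc w))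
        (((InnerProductSpace.toDual ℝ H) (gradg (Pc z))).comp Pc) z :=
      (hasGradientAt_iff_hasFDerivAt.mp (hgdiff (Pc z))).comp z Pc.hasFDerivAt
    have hEq : (((InnerProductSpace.toDual ℝ H) (gradg (Pc z))).comp Pc)
        = (InnerProductSpace.toDual ℝ H) (gradh z) := by
      ext v
      simp only [ContinuousLinearMap.comp_apply, InnerProductSpace.toDual_apply_apply]
      rw [hgradh, hPc z, hPc (gradg (Pc z))]
      exact (Submodule.inner_starProjection_left_eq_right V _ v).symm
    have hfun : (fun w => g (PV w)) = fun w => g (Pc w) := funext fun w => by rw [hPc]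
    rw [hfun]
    exact hasGradientAt_iff_hasFDerivAt.mpr (hEq ▸ hcomp)
  -- Lipschitz bound for gradh
  have hliph : ∀ a b : H, ‖gradh a - gradh b‖ ≤ (1 / βV) * ‖a - b‖ := by
    intro a b
    have := hgradhlip.dist_le_mul a b
    rwa [dist_eq_norm, dist_eq_norm,
      Real.coe_toNNReal _ (by positivity : (0:ℝ) ≤ 1 / βV)] at this
  -- cocoercivity (Baillon-Haddad)
  have hcoco : ∀ a b : H, βV * ‖gradh a - gradh b‖ ^ 2 ≤ ⟪gradh a - gradh b, a - b⟫ :=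
    fun a b => fdrs_cocoercive hβV hconvh hdiffh hliph a b
  -- firm nonexpansiveness of prox
  have hfirm := fdrs_prox_firm hγ0 hfconv hprox
  -- the reflection 2 P_V - I is an isometry
  have hRiso : ∀ a b : H,
      ‖((2:ℝ) • PV a - a) - ((2:ℝ) • PV b - b)‖ ^ 2 = ‖a - b‖ ^ 2 := by
    intro a b
    have hm : ((2:ℝ) • PV a - a) - ((2:ℝ) • PV b - b)
        = (2:ℝ) • Pc (a - b) + (-1:ℝ) • (a - b) := by
      rw [hPc a, hPc b, map_sub]; module
    rw [hm, fdrs_norm_smul_add_smul_sq]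
    have horth : ⟪(a - b) - Pc (a - b), Pc (a - b)⟫ = 0 :=
      Submodule.starProjection_inner_eq_zero (a - b) _
        (Submodule.coe_mem (V.orthogonalProjection (a - b)))
    have hip : ⟪Pc (a - b), a - b⟫ = ‖Pc (a - b)‖ ^ 2 := by
      have h' : ⟪a - b, Pc (a - b)⟫ - ⟪Pc (a - b), Pc (a - b)⟫ = 0 := by
        rw [← inner_sub_left]; exact horth
      have h'' : ⟪Pc (a - b), Pc (a - b)⟫ = ‖Pc (a - b)‖ ^ 2 :=
        real_inner_self_eq_norm_sq _
      have hcm : ⟪Pc (a - b), a - b⟫ = ⟪a - b, Pc (a - b)⟫ := real_inner_comm _ _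
      linarith
    rw [hip]
    ring
  -- the composed reflection Q is nonexpansive (squared form)
  have hQne : ∀ a b : H,
      ‖((2:ℝ) • proxf ((2:ℝ) • PV a - a) - ((2:ℝ) • PV a - a))
        - ((2:ℝ) • proxf ((2:ℝ) • PV b - b) - ((2:ℝ) • PV b - b))‖ ^ 2 ≤ ‖a - b‖ ^ 2 := by
    intro a b
    have hm : ((2:ℝ) • proxf ((2:ℝ) • PV a - a) - ((2:ℝ) • PV a - a))
        - ((2:ℝ) • proxf ((2:ℝ) • PV b - b) - ((2:ℝ) • PV b - b))
        = (2:ℝ) • (proxf ((2:ℝ) • PV a - a) - proxf ((2:ℝ) • PV b - b))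
          + (-1:ℝ) • (((2:ℝ) • PV a - a) - ((2:ℝ) • PV b - b)) := by
      module
    rw [hm, fdrs_norm_smul_add_smul_sq]
    have hf := hfirm ((2:ℝ) • PV a - a) ((2:ℝ) • PV b - b)
    have hiso := hRiso a b
    nlinarith [hf, hiso]
  -- the operator S = (I + Q)/2 applied after F: T = S ∘ F
  have hTz : ∀ z, T z = (fun w => (1/2:ℝ) • w
      + (1/2:ℝ) • ((2:ℝ) • proxf ((2:ℝ) • PV w - w) - ((2:ℝ) • PV w - w)))
      (z - γ • gradh z) := fun z => hT z
  have hSineq := fdrs_half_averaged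
    (S := fun w => (1/2:ℝ) • w
      + (1/2:ℝ) • ((2:ℝ) • proxf ((2:ℝ) • PV w - w) - ((2:ℝ) • PV w - w)))
    (Q := fun w => (2:ℝ) • proxf ((2:ℝ) • PV w - w) - ((2:ℝ) • PV w - w))
    (fun w => rfl) hQne
  -- the forward operator inequality
  have hFineq : ∀ a b : H, ‖(a - γ • gradh a) - (b - γ • gradh b)‖ ^ 2
      ≤ ‖a - b‖ ^ 2 - ((2 * βV - γ) / γ) * ‖γ • (gradh a - gradh b)‖ ^ 2 := by
    intro a b
    have hfd : (a - γ • gradh a) - (b - γ • gradh b)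
        = (1:ℝ) • (a - b) + (-γ : ℝ) • (gradh a - gradh b) := by module
    rw [hfd, fdrs_norm_smul_add_smul_sq]
    have hco := hcoco a b
    have hcomm : ⟪a - b, gradh a - gradh b⟫ = ⟪gradh a - gradh b, a - b⟫ :=
      real_inner_comm _ _
    rw [hcomm]
    have hnu : ‖γ • (gradh a - gradh b)‖ ^ 2 = γ ^ 2 * ‖gradh a - gradh b‖ ^ 2 := by
      rw [norm_smul, Real.norm_eq_abs, mul_pow, sq_abs]
    rw [hnu]
    have hrhs : ((2 * βV - γ) / γ) * (γ ^ 2 * ‖gradh a - gradh b‖ ^ 2)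
        = (2 * βV - γ) * γ * ‖gradh a - gradh b‖ ^ 2 := by
      field_simp
    rw [hrhs]
    nlinarith [mul_le_mul_of_nonneg_left hco (by positivity : (0:ℝ) ≤ 2 * γ)]
  -- key inequality: T is averaged
  have key : ∀ x y : H, ‖T x - T y‖ ^ 2
      ≤ ‖x - y‖ ^ 2 - ((2 * βV - γ) / (2 * βV)) * ‖(x - T x) - (y - T y)‖ ^ 2 := by
    intro x y
    have hS := hSineq (x - γ • gradh x) (y - γ • gradh y)
    rw [← hT x, ← hT y] at hS
    have hF := hFineq x y
    have he : (x - T x) - (y - T y)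
        = γ • (gradh x - gradh y)
          + (((x - γ • gradh x) - T x) - ((y - γ • gradh y) - T y)) := by
      rw [smul_sub]; abel
    rw [he]
    have hyoung : ((2 * βV - γ) / (2 * βV)) * ‖γ • (gradh x - gradh y)
          + (((x - γ • gradh x) - T x) - ((y - γ • gradh y) - T y))‖ ^ 2
        ≤ ((2 * βV - γ) / γ) * ‖γ • (gradh x - gradh y)‖ ^ 2
          + ‖((x - γ • gradh x) - T x) - ((y - γ • gradh y) - T y)‖ ^ 2 := by
      rw [norm_add_sq_real]
      exact fdrs_young_comb βV γ _ _ _ hβV hγ0 hγ2 (real_inner_le_norm _ _)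
    linarith [hS, hF, hyoung]
  -- construct N
  refine ⟨fun z => (1 - (4 * βV - γ) / (2 * βV)) • z + ((4 * βV - γ) / (2 * βV)) • T z,
    ?_, ?_⟩
  · -- N is nonexpansive
    apply LipschitzWith.of_dist_le_mul
    intro x y
    rw [NNReal.coe_one, one_mul, dist_eq_norm, dist_eq_norm]
    have hNd : ((1 - (4 * βV - γ) / (2 * βV)) • x + ((4 * βV - γ) / (2 * βV)) • T x)
        - ((1 - (4 * βV - γ) / (2 * βV)) • y + ((4 * βV - γ) / (2 * βV)) • T y)
        = (1:ℝ) • (x - y)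
          + (-((4 * βV - γ) / (2 * βV))) • ((x - T x) - (y - T y)) := by
      module
    rw [hNd]
    have hk := key x y
    have hd : T x - T y = (1:ℝ) • (x - y) + (-1:ℝ) • ((x - T x) - (y - T y)) := by
      module
    have hdsq : ‖T x - T y‖ ^ 2 = ‖x - y‖ ^ 2 - 2 * ⟪x - y, (x - T x) - (y - T y)⟫
        + ‖(x - T x) - (y - T y)‖ ^ 2 := by
      rw [hd, fdrs_norm_smul_add_smul_sq]; ring
    rw [hdsq] at hk
    have hsq : ‖(1:ℝ) • (x - y)
        + (-((4 * βV - γ) / (2 * βV))) • ((x - T x) - (y - T y))‖ ^ 2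
        ≤ ‖x - y‖ ^ 2 := by
      rw [fdrs_norm_smul_add_smul_sq]
      have hι1 : (4 * βV - γ) / (2 * βV) = 1 + (2 * βV - γ) / (2 * βV) := by
        field_simp
        ring
      rw [hι1]
      have hk2 : (1 + (2 * βV - γ) / (2 * βV)) * ‖(x - T x) - (y - T y)‖ ^ 2
          ≤ 2 * ⟪x - y, (x - T x) - (y - T y)⟫ := by
        linarith [hk]
      have hκnn : (0:ℝ) ≤ 1 + (2 * βV - γ) / (2 * βV) := by positivity
      nlinarith [mul_le_mul_of_nonneg_left hk2 hκnn]
    nlinarith [hsq, norm_nonneg ((1:ℝ) • (x - y)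
      + (-((4 * βV - γ) / (2 * βV))) • ((x - T x) - (y - T y))),
      norm_nonneg (x - y)]
  · -- the averaged representation
    intro z
    have hαι : (2 * βV / (4 * βV - γ)) * ((4 * βV - γ) / (2 * βV)) = 1 := by
      field_simp
      exact div_self (ne_of_gt (by linarith))
    rw [smul_add, smul_smul, smul_smul, hαι, one_smul, ← add_assoc, ← add_smul]
    have hco : (1 - 2 * βV / (4 * βV - γ))
        + (2 * βV / (4 * βV - γ)) * (1 - (4 * βV - γ) / (2 * βV)) = 0 := by
      rw [mul_sub, mul_one, hαι]; ring
    rw [hco, zero_smul, zero_add]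
end

section
/- (FDRS optimality conditions.) Let γ > 0. The following set equality holds: {x ∈ V : there exist p ∈ ∂f(x) and q ∈ V⊥ with p + ∇h(x) + q = 0} = {P_V z : z ∈ H and T(z) = z}. Moreover, if z* is a fixed point of T and x* := P_V z*, then x_h(z*) = x_f(z*) = x*, and z* − x* = P_{V⊥}(z*) ∈ V⊥ with ∇̃f(x_f(z*)) + ∇h(x*) + ∇̃χ_V(x_h(z*)) = 0. -/
open scoped RealInnerProductSpace


private lemma subgrad_of_isMinOn {H : Type*} [NormedAddCommGroup H] [InnerProductSpace ℝ H]
    {f : H → ℝ} (hf : ConvexOn ℝ Set.univ f) {γ : ℝ} (hγ : 0 < γ) (x u : H)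
    (hmin : IsMinOn (fun y => f y + (1 / (2 * γ)) * ‖y - x‖ ^ 2) Set.univ u)
    (y : H) : f u + γ⁻¹ * ⟪y - u, x - u⟫ ≤ f y := by
  have hsym : ⟪y - u, x - u⟫ = - ⟪u - x, y - u⟫ := by
    rw [real_inner_comm, show x - u = -(u - x) by abel, inner_neg_left]
  have key : ∀ t : ℝ, 0 < t → t ≤ 1 →
      f u ≤ f y + 2 * (1/(2*γ)) * ⟪u - x, y - u⟫ + (1/(2*γ)) * t * ‖y - u‖^2 := by
    intro t ht ht1
    have h1 := hmin (Set.mem_univ (u + t • (y - u)))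
    simp only [Set.mem_setOf_eq] at h1
    have hconv : f (u + t • (y - u)) ≤ (1 - t) * f u + t * f y := by
      have h2 := hf.2 (Set.mem_univ u) (Set.mem_univ y)
        (by linarith : (0:ℝ) ≤ 1 - t) ht.le (by ring)
      have h3 : (1 - t) • u + t • y = u + t • (y - u) := by module
      rwa [h3] at h2
    have hnorm : ‖u + t • (y - u) - x‖^2
        = ‖u - x‖^2 + 2 * (t * ⟪u - x, y - u⟫) + t^2 * ‖y - u‖^2 := by
      have h4 : u + t • (y - u) - x = (u - x) + t • (y - u) := by abel
      rw [h4, norm_add_sq_real, real_inner_smul_right, norm_smul]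
      simp [mul_pow, sq_abs]
    rw [hnorm] at h1
    have h5 : t * f u ≤ t * (f y + 2 * (1/(2*γ)) * ⟪u - x, y - u⟫
        + (1/(2*γ)) * t * ‖y - u‖^2) := by nlinarith [h1, hconv]
    exact le_of_mul_le_mul_left h5 ht
  have hfinal : ∀ ε : ℝ, 0 < ε → f u ≤ (f y + 2 * (1/(2*γ)) * ⟪u - x, y - u⟫) + ε := by
    intro ε hε
    have hc : (0:ℝ) < 1/(2*γ) := by positivity
    have hDpos : (0:ℝ) < 1/(2*γ) * ‖y - u‖^2 + 1 := by positivity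
    have ht : 0 < min 1 (ε / (1/(2*γ) * ‖y - u‖^2 + 1)) :=
      lt_min one_pos (div_pos hε hDpos)
    have hk := key _ ht (min_le_left _ _)
    have h8 : min 1 (ε / (1/(2*γ) * ‖y - u‖^2 + 1)) * (1/(2*γ) * ‖y - u‖^2 + 1) ≤ ε := by
      rw [← le_div_iff₀ hDpos]; exact min_le_right _ _
    nlinarith [hk, h8, ht]
  have hlim := le_of_forall_pos_le_add hfinal
  have h2c : γ⁻¹ = 2 * (1/(2*γ)) := by field_simp
  rw [hsym, h2c]
  linarith [hlim]

private lemma eq_of_subgrad {H : Type*} [NormedAddCommGroup H] [InnerProductSpace ℝ H]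
    {f : H → ℝ} {γ : ℝ} (hγ : 0 < γ) (x u v : H)
    (hu : ∀ y, f u + γ⁻¹ * ⟪y - u, x - u⟫ ≤ f y)
    (hv : ∀ y, f v + γ⁻¹ * ⟪y - v, x - v⟫ ≤ f y) : u = v := by
  have h1 := hu v
  have h2 := hv u
  have hsum : ⟪v - u, x - u⟫ + ⟪u - v, x - v⟫ = ‖v - u‖^2 := by
    have e2 : ⟪v - u, (x - u) - (x - v)⟫ = ‖v - u‖^2 := by
      rw [show (x - u) - (x - v) = v - u by abel, real_inner_self_eq_norm_sq]
    have e3 : ⟪v - u, x - u⟫ - ⟪v - u, x - v⟫ = ‖v - u‖^2 := by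
      rw [← inner_sub_right]; exact e2
    have e4 : ⟪u - v, x - v⟫ = - ⟪v - u, x - v⟫ := by
      rw [show u - v = -(v - u) by abel, inner_neg_left]
    linarith
  have hγi : (0:ℝ) < γ⁻¹ := by positivity
  have hs : γ⁻¹ * (⟪v - u, x - u⟫ + ⟪u - v, x - v⟫) ≤ 0 := by nlinarith [h1, h2]
  rw [hsum] at hs
  have hnn : ‖v - u‖^2 ≤ 0 := by nlinarith [hs, hγi]
  have hz : ‖v - u‖ = 0 := by nlinarith [norm_nonneg (v - u)]
  exact (norm_sub_eq_zero_iff.mp hz).symm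

/-- the FDRS optimality conditions. -/
theorem fdrs_optimality_conditions
    {H : Type*} [NormedAddCommGroup H] [InnerProductSpace ℝ H] [CompleteSpace H]
    (V : Submodule ℝ H) [CompleteSpace V]
    (PV : H → H) (hPV : ∀ x, PV x = (Submodule.orthogonalProjectionOnto V x : H))
    (f g : H → ℝ) (gradg gradh proxf : H → H)
    (β γ : ℝ) (hβ : 0 < β) (hγ : 0 < γ)
    (hfconv : ConvexOn ℝ Set.univ f) (hfcont : Continuous f)
    (hgconv : ConvexOn ℝ Set.univ g)
    (hgdiff : ∀ x, HasGradientAt g (gradg x) x)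
    (hglip : LipschitzWith (1 / β).toNNReal gradg)
    (hgradh : ∀ x, gradh x = PV (gradg (PV x)))
    (hprox : ∀ x, IsMinOn (fun y => f y + (1 / (2 * γ)) * ‖y - x‖ ^ 2) Set.univ (proxf x))
    (T : H → H)
    (hT : ∀ z, T z = (1 / 2 : ℝ) • (z - γ • gradh z)
        + (1 / 2 : ℝ) • ((2 : ℝ) • proxf ((2 : ℝ) • PV (z - γ • gradh z) - (z - γ • gradh z))
            - ((2 : ℝ) • PV (z - γ • gradh z) - (z - γ • gradh z)))) :
    -- the set equality
    ({x : H | x ∈ V ∧ ∃ p : H, (∀ y : H, f x + ⟪y - x, p⟫ ≤ f y) ∧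
        ∃ q ∈ Vᗮ, p + gradh x + q = 0}
      = {x : H | ∃ z : H, T z = z ∧ x = PV z}) ∧
    -- moreover, for each fixed point z* of T with x* := P_V z*:
    (∀ zs : H, T zs = zs →
      PV zs = proxf ((2 : ℝ) • PV (zs - γ • gradh zs) - (zs - γ • gradh zs)) ∧
      zs - PV zs ∈ Vᗮ ∧
      γ⁻¹ • (((2 : ℝ) • PV (zs - γ • gradh zs) - (zs - γ • gradh zs))
          - proxf ((2 : ℝ) • PV (zs - γ • gradh zs) - (zs - γ • gradh zs)))
        + gradh (PV zs) + γ⁻¹ • (zs - PV zs) = 0) := by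
  -- basic projection facts
  have hPmem : ∀ z, PV z ∈ V := fun z => by rw [hPV]; exact (Submodule.orthogonalProjectionOnto V z).2
  have hPid : ∀ x ∈ V, PV x = x := fun x hx => by
    rw [hPV]; exact Submodule.starProjection_eq_self_iff.mpr hx
  have hPadd : ∀ a b, PV (a + b) = PV a + PV b := fun a b => by simp [hPV, map_add]
  have hPsmul : ∀ (c : ℝ) (a : H), PV (c • a) = c • PV a := fun c a => by simp [hPV, map_smul]
  have hPsub : ∀ a b, PV (a - b) = PV a - PV b := fun a b => by simp [hPV, map_sub]
  have hPzero : ∀ q ∈ Vᗮ, PV q = 0 := fun q hq => by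
    rw [hPV, Submodule.orthogonalProjectionOnto_apply_of_mem_orthogonal hq]
    simp
  have hPorth : ∀ z, z - PV z ∈ Vᗮ := fun z => by
    rw [hPV]; exact Submodule.sub_starProjection_mem_orthogonal z
  have hgmem : ∀ z, gradh z ∈ V := fun z => by rw [hgradh]; exact hPmem _
  have hgeq : ∀ z w, PV z = PV w → gradh z = gradh w := fun z w h => by
    rw [hgradh, hgradh, h]
  have hgPV : ∀ z, gradh (PV z) = gradh z := fun z => hgeq _ _ (hPid _ (hPmem z))
  have hPw : ∀ z, PV (z - γ • gradh z) = PV z - γ • gradh z := fun z => by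
    rw [hPsub, hPsmul, hPid _ (hgmem z)]
  -- subgradient property of the prox
  have hsub : ∀ w y, f (proxf w) + γ⁻¹ * ⟪y - proxf w, w - proxf w⟫ ≤ f y :=
    fun w => subgrad_of_isMinOn hfconv hγ w (proxf w) (hprox w)
  -- fixed-point characterization
  have hfix : ∀ z, T z = z ↔
      proxf ((2 : ℝ) • PV (z - γ • gradh z) - (z - γ • gradh z)) = PV z := by
    intro z
    have key : (1 / 2 : ℝ) • (z - γ • gradh z)
        + (1 / 2 : ℝ) • ((2 : ℝ) • proxf ((2 : ℝ) • PV (z - γ • gradh z) - (z - γ • gradh z))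
            - ((2 : ℝ) • PV (z - γ • gradh z) - (z - γ • gradh z)))
        = z + (proxf ((2 : ℝ) • PV (z - γ • gradh z) - (z - γ • gradh z)) - PV z) := by
      rw [hPw]; module
    rw [hT z, key, add_eq_left, sub_eq_zero]
  -- the third optimality identity, for any fixed point
  have hthird : ∀ z, T z = z →
      γ⁻¹ • (((2 : ℝ) • PV (z - γ • gradh z) - (z - γ • gradh z))
          - proxf ((2 : ℝ) • PV (z - γ • gradh z) - (z - γ • gradh z)))
        + gradh (PV z) + γ⁻¹ • (z - PV z) = 0 := by
    intro z hz
    rw [(hfix z).mp hz, hgPV, hPw]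
    match_scalars <;> (field_simp; try ring)
  constructor
  · ext x
    simp only [Set.mem_setOf_eq]
    constructor
    · rintro ⟨hx, p, hp, q, hq, hpq⟩
      refine ⟨x + γ • q, ?_, ?_⟩
      · have hPz : PV (x + γ • q) = x := by
          rw [hPadd, hPsmul, hPid x hx, hPzero q hq, smul_zero, add_zero]
        have hgz : gradh (x + γ • q) = gradh x := hgeq _ _ (by rw [hPz, hPid x hx])
        rw [hfix, hPw, hPz, hgz]
        refine eq_of_subgrad hγ _ _ x (hsub _) ?_
        intro y
        have hrx : ((2 : ℝ) • (x - γ • gradh x) - (x + γ • q - γ • gradh x)) - x = γ • p := by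
          have h0 : γ • p + γ • gradh x + γ • q = 0 := by
            rw [← smul_add, ← smul_add, hpq, smul_zero]
          have h1 : ((2 : ℝ) • (x - γ • gradh x) - (x + γ • q - γ • gradh x)) - x - γ • p
              = -(γ • p + γ • gradh x + γ • q) := by module
          rw [h0, neg_zero] at h1
          exact sub_eq_zero.mp h1
        rw [hrx, real_inner_smul_right]
        have : γ⁻¹ * (γ * ⟪y - x, p⟫) = ⟪y - x, p⟫ := by
          rw [← mul_assoc, inv_mul_cancel₀ hγ.ne', one_mul]
        rw [this]
        exact hp y
      · have hPz : PV (x + γ • q) = x := by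
          rw [hPadd, hPsmul, hPid x hx, hPzero q hq, smul_zero, add_zero]
        exact hPz.symm
    · rintro ⟨z, hz, rfl⟩
      have hpr := (hfix z).mp hz
      refine ⟨hPmem z,
        γ⁻¹ • (((2 : ℝ) • PV (z - γ • gradh z) - (z - γ • gradh z)) - PV z), ?_,
        γ⁻¹ • (z - PV z), Submodule.smul_mem _ _ (hPorth z), ?_⟩
      · intro y
        have h := hsub ((2 : ℝ) • PV (z - γ • gradh z) - (z - γ • gradh z)) y
        rw [hpr] at h
        rw [real_inner_smul_right]
        exact h
      · have h := hthird z hz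
        rw [hpr] at h
        exact h
  · intro zs hzs
    exact ⟨((hfix zs).mp hzs).symm, hPorth zs, hthird zs hzs⟩
end

section
/- (Upper fundamental inequality.) Let γ > 0, let z ∈ H, let λ > 0, and set z⁺ := T_λ(z). Then for every x ∈ V: 2γλ(f(x_f) + h(x_h) − f(x) − h(x) + S_f(x_f, x) + S_h(x_h, x)) ≤ ‖z − x‖² − ‖z⁺ − x‖² + (1 − 2/λ)‖z⁺ − z‖² + 2γ⟪∇h(x_h), z − z⁺⟫. -/
open scoped RealInnerProductSpace
open Set InnerProductSpace

section Aux
variable {H : Type*} [NormedAddCommGroup H] [InnerProductSpace ℝ H] [CompleteSpace H]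

lemma aux_grad_add {f g : H → ℝ} {a b x : H} (hf : HasGradientAt f a x)
    (hg : HasGradientAt g b x) : HasGradientAt (fun w => f w + g w) (a + b) x := by
  rw [hasGradientAt_iff_hasFDerivAt] at *
  rw [map_add]; exact hf.add hg

lemma aux_grad_sub {f g : H → ℝ} {a b x : H} (hf : HasGradientAt f a x)
    (hg : HasGradientAt g b x) : HasGradientAt (fun w => f w - g w) (a - b) x := by
  rw [hasGradientAt_iff_hasFDerivAt] at *
  rw [map_sub]; exact hf.sub hg

lemma aux_grad_inner (c x : H) : HasGradientAt (fun w => ⟪c, w⟫) c x := by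
  rw [hasGradientAt_iff_hasFDerivAt]
  have : (fun w : H => ⟪c, w⟫) = ⇑(toDual ℝ H c) := by
    funext w; simp [toDual_apply_apply]
  rw [this]
  exact (toDual ℝ H c).hasFDerivAt

lemma aux_grad_normsq (c : ℝ) (r x : H) :
    HasGradientAt (fun w => c * ‖w - r‖ ^ 2) ((2 * c) • (x - r)) x := by
  rw [hasGradientAt_iff_isLittleO]
  have heq : (fun w : H => c * ‖w - r‖ ^ 2 - c * ‖x - r‖ ^ 2 - ⟪(2 * c) • (x - r), w - x⟫)
      = fun w : H => c * ‖w - x‖ ^ 2 := by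
    funext w
    have h1 : w - r = (w - x) + (x - r) := by abel
    rw [real_inner_smul_left, h1, norm_add_sq_real]
    rw [real_inner_comm (x - r) (w - x)]
    ring
  rw [heq]
  rw [Asymptotics.isLittleO_iff]
  intro ε hε
  have hball : Metric.ball x (ε / (|c| + 1)) ∈ nhds x :=
    Metric.ball_mem_nhds x (by positivity)
  filter_upwards [hball] with w hw
  have hd : ‖w - x‖ < ε / (|c| + 1) := by
    rw [Metric.mem_ball, dist_eq_norm] at hw; exact hw
  have h0 : (0:ℝ) ≤ ‖w - x‖ := norm_nonneg _
  have : ‖c * ‖w - x‖ ^ 2‖ = |c| * (‖w - x‖ * ‖w - x‖) := by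
    rw [Real.norm_eq_abs, abs_mul, abs_of_nonneg (by positivity : (0:ℝ) ≤ ‖w - x‖ ^ 2)]; ring
  rw [this]
  have hle : |c| * ‖w - x‖ ≤ ε := by
    have h1 : |c| * ‖w - x‖ ≤ (|c| + 1) * (ε / (|c| + 1)) := by
      apply mul_le_mul (by linarith [abs_nonneg c]) hd.le h0 (by positivity)
    have h2 : (|c| + 1) * (ε / (|c| + 1)) = ε := by field_simp
    linarith
  calc |c| * (‖w - x‖ * ‖w - x‖) = (|c| * ‖w - x‖) * ‖w - x‖ := by ring
    _ ≤ ε * ‖w - x‖ := mul_le_mul_of_nonneg_right hle h0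


lemma aux_line_deriv {f : H → ℝ} {g₀ : H} (u v : H) (t : ℝ)
    (hg : HasGradientAt f g₀ (t • v + u)) :
    HasDerivAt (fun s : ℝ => f (s • v + u)) ⟪g₀, v⟫ t := by
  have h1 : HasDerivAt (fun s : ℝ => s • v + u) v t := by
    simpa using ((hasDerivAt_id t).smul_const v).add_const u
  have h2 : HasFDerivAt f (toDual ℝ H g₀) (t • v + u) := hg
  have := h2.comp_hasDerivAt t h1
  simp [toDual_apply_apply] at this
  exact this

lemma aux_convex_lower {f : H → ℝ} (hconv : ConvexOn ℝ univ f) {y gy : H}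
    (hg : HasGradientAt f gy y) (x : H) :
    f y + ⟪gy, x - y⟫ ≤ f x := by
  have hψ : ConvexOn ℝ univ (fun t : ℝ => f (t • (x - y) + y)) := by
    have := hconv.comp_affineMap (AffineMap.lineMap y x : ℝ →ᵃ[ℝ] H)
    simp only [preimage_univ] at this
    have he : (f ∘ ⇑(AffineMap.lineMap y x : ℝ →ᵃ[ℝ] H))
        = fun t : ℝ => f (t • (x - y) + y) := by
      funext t
      simp only [Function.comp_apply, AffineMap.lineMap_apply_module]
      congr 1
      module
    rw [he] at this
    simpa using this
  have hd : HasDerivAt (fun t : ℝ => f (t • (x - y) + y)) ⟪gy, x - y⟫ 0 := by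
    apply aux_line_deriv
    simpa using hg
  have := hψ.le_slope_of_hasDerivAt (mem_univ (0:ℝ)) (mem_univ (1:ℝ)) zero_lt_one hd
  rw [slope_def_field] at this
  simp only [one_smul, zero_smul, zero_add, sub_add_cancel, sub_zero, div_one] at this
  linarith

lemma aux_descent {f : H → ℝ} {G : H → H} {L : ℝ} (hL : 0 ≤ L)
    (hdiff : ∀ x, HasGradientAt f (G x) x)
    (hlip : LipschitzWith L.toNNReal G) (u v : H) :
    f v ≤ f u + ⟪G u, v - u⟫ + L / 2 * ‖v - u‖ ^ 2 := by
  set c : ℝ := ‖v - u‖ ^ 2 with hc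
  set χ : ℝ → ℝ := fun t => f (t • (v - u) + u) - t * ⟪G u, v - u⟫ - L * t ^ 2 / 2 * c with hχdef
  have hχ : ∀ t : ℝ, HasDerivAt χ
      (⟪G (t • (v - u) + u), v - u⟫ - ⟪G u, v - u⟫ - L * t * c) t := by
    intro t
    have h1 := aux_line_deriv u (v - u) t (hdiff _)
    have h2 : HasDerivAt (fun s : ℝ => s * ⟪G u, v - u⟫) ⟪G u, v - u⟫ t := by
      simpa using (hasDerivAt_id t).mul_const ⟪G u, v - u⟫
    have h3 : HasDerivAt (fun s : ℝ => L * s ^ 2 / 2 * c) (L * t * c) t := by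
      have := ((hasDerivAt_pow 2 t).const_mul L).div_const 2 |>.mul_const c
      simpa using this.congr_deriv (by push_cast; ring)
    exact (h1.sub h2).sub h3
  have hmono : AntitoneOn χ (Icc (0:ℝ) 1) := by
    apply antitoneOn_of_deriv_nonpos (convex_Icc 0 1)
    · exact fun t _ => ((hχ t).continuousAt).continuousWithinAt
    · exact fun t _ => ((hχ t).differentiableAt).differentiableWithinAt
    · intro t ht
      rw [interior_Icc, mem_Ioo] at ht
      rw [(hχ t).deriv]
      have hsub : ⟪G (t • (v - u) + u), v - u⟫ - ⟪G u, v - u⟫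
          = ⟪G (t • (v - u) + u) - G u, v - u⟫ := (inner_sub_left _ _ _).symm
      rw [hsub]
      have hb1 : ⟪G (t • (v - u) + u) - G u, v - u⟫
          ≤ ‖G (t • (v - u) + u) - G u‖ * ‖v - u‖ := real_inner_le_norm _ _
      have hb2 : ‖G (t • (v - u) + u) - G u‖ ≤ L * (t * ‖v - u‖) := by
        have := hlip.dist_le_mul (t • (v - u) + u) u
        rw [dist_eq_norm, dist_eq_norm] at this
        have he : t • (v - u) + u - u = t • (v - u) := by abel
        rw [he, norm_smul, Real.norm_eq_abs, abs_of_pos ht.1] at this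
        rwa [Real.coe_toNNReal _ hL] at this
      have : ⟪G (t • (v - u) + u) - G u, v - u⟫ ≤ L * t * c := by
        calc ⟪G (t • (v - u) + u) - G u, v - u⟫ ≤ ‖G (t • (v - u) + u) - G u‖ * ‖v - u‖ := hb1
          _ ≤ (L * (t * ‖v - u‖)) * ‖v - u‖ :=
            mul_le_mul_of_nonneg_right hb2 (norm_nonneg _)
          _ = L * t * c := by rw [hc]; ring
      linarith
  have := hmono (left_mem_Icc.mpr zero_le_one) (right_mem_Icc.mpr zero_le_one) zero_le_one
  simp only [hχdef] at this
  simp only [one_smul, zero_smul, zero_add, sub_add_cancel, one_pow, zero_pow, one_mul,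
    zero_mul, mul_zero, zero_div, sub_zero] at this
  linarith


set_option linter.unusedSectionVars false

lemma aux_concave_inner (c : H) : ConcaveOn ℝ (univ : Set H) (fun w => ⟪c, w⟫) := by
  refine ⟨convex_univ, ?_⟩
  intro x _ y _ a b _ _ _
  simp only [inner_add_right, inner_smul_right, smul_eq_mul, le_refl]

lemma aux_convex_linpart (c : ℝ) (r : H) :
    ConvexOn ℝ (univ : Set H) (fun w => c * (‖r‖ ^ 2 - 2 * ⟪r, w⟫)) := by
  refine ⟨convex_univ, ?_⟩
  intro x _ y _ a b _ _ hab
  simp only [inner_add_right, inner_smul_right, smul_eq_mul]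
  apply le_of_eq
  linear_combination (c * ‖r‖ ^ 2) * hab.symm

lemma aux_smooth_convex_lower {f : H → ℝ} {G : H → H} {b : ℝ} (hb : 0 < b)
    (hconv : ConvexOn ℝ univ f) (hdiff : ∀ x, HasGradientAt f (G x) x)
    (hlip : LipschitzWith (1 / b).toNNReal G) (x y : H) :
    f y + ⟪G y, x - y⟫ + b / 2 * ‖G x - G y‖ ^ 2 ≤ f x := by
  set c : H := G y with hcdef
  set φ : H → ℝ := fun w => f w - ⟪c, w⟫ with hφdef
  have hφdiff : ∀ w, HasGradientAt φ (G w - c) w :=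
    fun w => aux_grad_sub (hdiff w) (aux_grad_inner c w)
  have hφconv : ConvexOn ℝ univ φ := hconv.sub (aux_concave_inner c)
  have hφlip : LipschitzWith (1 / b).toNNReal (fun w => G w - c) := fun a b' => by
    simpa [edist_sub_right] using hlip a b'
  have hmin : ∀ w, φ y ≤ φ w := by
    intro w
    have := aux_convex_lower hφconv (hφdiff y) w
    simpa [hcdef, sub_self] using this
  have hdesc := aux_descent (by positivity : (0:ℝ) ≤ 1 / b) hφdiff hφlip x
      (x - b • (G x - c))
  have h1 := (hmin (x - b • (G x - c))).trans hdesc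
  have he1 : x - b • (G x - c) - x = -(b • (G x - c)) := by abel
  rw [he1] at h1
  rw [inner_neg_right, real_inner_smul_right, inner_sub_left] at h1
  have he2 : ‖-(b • (G x - c))‖ ^ 2 = b ^ 2 * ‖G x - c‖ ^ 2 := by
    rw [norm_neg, norm_smul, Real.norm_eq_abs, abs_of_pos hb, mul_pow]
  rw [he2] at h1
  simp only [hφdef] at h1
  have hinner : ⟪G x - c, G x⟫ - ⟪G x - c, c⟫ = ‖G x - c‖ ^ 2 := by
    rw [← inner_sub_right, ← real_inner_self_eq_norm_sq]
  have hb' : b ≠ 0 := hb.ne'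
  have hKey : 1 / b / 2 * (b ^ 2 * ‖G x - c‖ ^ 2) = b / 2 * ‖G x - c‖ ^ 2 := by
    field_simp
  rw [hKey] at h1
  rw [real_inner_comm (G x - c) (G x), real_inner_comm (G x - c) c] at h1
  rw [hinner] at h1
  have hcx2 : ⟪c, x - y⟫ = ⟪c, x⟫ - ⟪c, y⟫ := inner_sub_right c x y
  linarith [h1, hcx2]

lemma aux_strong_convex_lower {f : H → ℝ} {m : ℝ}
    (hstrong : StrongConvexOn univ m f) {y gy : H} (hg : HasGradientAt f gy y) (x : H) :
    f y + ⟪gy, x - y⟫ + m / 2 * ‖x - y‖ ^ 2 ≤ f x := by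
  have hφconv : ConvexOn ℝ univ (fun w => f w - m / 2 * ‖w‖ ^ 2) :=
    strongConvexOn_iff_convex.mp hstrong
  have hq : HasGradientAt (fun w : H => m / 2 * ‖w - 0‖ ^ 2) ((2 * (m / 2)) • (y - 0)) y :=
    aux_grad_normsq (m / 2) 0 y
  have hq' : HasGradientAt (fun w : H => m / 2 * ‖w‖ ^ 2) (m • y) y := by
    have he : (fun w : H => m / 2 * ‖w - 0‖ ^ 2) = fun w : H => m / 2 * ‖w‖ ^ 2 := by
      funext w; rw [sub_zero]
    have he2 : (2 * (m / 2)) • (y - (0:H)) = m • y := by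
      rw [sub_zero]
      have : 2 * (m / 2) = m := by ring
      rw [this]
    rwa [he, he2] at hq
  have hgrad : HasGradientAt (fun w => f w - m / 2 * ‖w‖ ^ 2) (gy - m • y) y :=
    aux_grad_sub hg hq'
  have h1 := aux_convex_lower hφconv hgrad x
  rw [inner_sub_left, real_inner_smul_left, inner_sub_right] at h1
  have e1 : ‖x - y‖ ^ 2 = ‖x‖ ^ 2 - 2 * ⟪x, y⟫ + ‖y‖ ^ 2 := norm_sub_sq_real x y
  have e2 : ⟪y, y⟫ = ‖y‖ ^ 2 := real_inner_self_eq_norm_sq y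
  have e3 : ⟪y, x⟫ = ⟪x, y⟫ := real_inner_comm x y
  have e4 : ⟪gy, x - y⟫ = ⟪gy, x⟫ - ⟪gy, y⟫ := inner_sub_right gy x y
  have e5 : ⟪y, x - y⟫ = ⟪x, y⟫ - ‖y‖ ^ 2 := by rw [inner_sub_right, e2, e3]
  have key : m / 2 * ‖x - y‖ ^ 2
      = m / 2 * ‖x‖ ^ 2 - m * ⟪y, x - y⟫ - m / 2 * ‖y‖ ^ 2 := by
    rw [e1, e5]; ring
  linarith [h1, e4, key]

lemma aux_strong_min {φ : H → ℝ} {m : ℝ} (hφ : StrongConvexOn univ m φ) {p : H}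
    (hmin : IsMinOn φ univ p) (x : H) : φ p + m / 2 * ‖x - p‖ ^ 2 ≤ φ x := by
  set C : ℝ := m / 2 * ‖x - p‖ ^ 2 with hC
  have key : ∀ t : ℝ, t ∈ Ioo (0:ℝ) 1 → φ p + (1 - t) * C ≤ φ x := by
    intro t ht
    have h2 := hφ.2 (mem_univ x) (mem_univ p) ht.1.le
      (by linarith [ht.2] : (0:ℝ) ≤ 1 - t) (by ring)
    have h3 : φ p ≤ φ (t • x + (1 - t) • p) := hmin (mem_univ _)
    have h4 : t * (φ p + (1 - t) * C) ≤ t * φ x := by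
      simp only [smul_eq_mul] at h2
      rw [← hC] at h2
      have h23 := h3.trans h2
      ring_nf at h23 ⊢
      linarith [h23]
    exact le_of_mul_le_mul_left h4 ht.1
  have hlim : Filter.Tendsto (fun t : ℝ => φ p + (1 - t) * C) (nhdsWithin 0 (Ioi 0))
      (nhds (φ p + C)) := by
    have hcont : Continuous (fun t : ℝ => φ p + (1 - t) * C) := by continuity
    have := hcont.tendsto 0
    simp only [sub_zero, one_mul] at this
    exact this.mono_left nhdsWithin_le_nhds
  refine le_of_tendsto hlim ?_
  filter_upwards [Ioo_mem_nhdsGT_of_mem (by constructor <;> norm_num : (0:ℝ) ∈ Ico 0 1)]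
    with t ht using key t ht

lemma aux_prox_strong {f : H → ℝ} {m γ : ℝ} (hγ : 0 < γ)
    (hstrong : StrongConvexOn univ m f) (r : H) :
    StrongConvexOn univ (m + 1 / γ) (fun y => f y + (1 / (2 * γ)) * ‖y - r‖ ^ 2) := by
  rw [strongConvexOn_iff_convex]
  have hf' : ConvexOn ℝ univ (fun w => f w - m / 2 * ‖w‖ ^ 2) :=
    strongConvexOn_iff_convex.mp hstrong
  have heq : (fun y : H => f y + (1 / (2 * γ)) * ‖y - r‖ ^ 2 - (m + 1 / γ) / 2 * ‖y‖ ^ 2)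
      = fun y : H => (f y - m / 2 * ‖y‖ ^ 2) + (1 / (2 * γ)) * (‖r‖ ^ 2 - 2 * ⟪r, y⟫) := by
    funext y
    have e1 : ‖y - r‖ ^ 2 = ‖y‖ ^ 2 - 2 * ⟪y, r⟫ + ‖r‖ ^ 2 := norm_sub_sq_real y r
    have e3 : ⟪y, r⟫ = ⟪r, y⟫ := real_inner_comm r y
    rw [e1, e3]
    field_simp
    ring
  rw [heq]
  exact hf'.add (aux_convex_linpart (1 / (2 * γ)) r)

end Aux
/-- the upper fundamental inequality. -/
theorem fdrs_upper_fundamental_inequality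
    {H : Type*} [NormedAddCommGroup H] [InnerProductSpace ℝ H] [CompleteSpace H]
    (V : Submodule ℝ H) [CompleteSpace V]
    (PV : H → H) (hPV : ∀ x, PV x = (V.orthogonalProjection x : H))
    (f g : H → ℝ) (gradg gradh gradf proxf : H → H) (h : H → ℝ)
    (β βV γ : ℝ) (hβ : 0 < β) (hβV : 0 < βV) (hγ : 0 < γ)
    (hfconv : ConvexOn ℝ Set.univ f) (hfcont : Continuous f)
    (hgconv : ConvexOn ℝ Set.univ g)
    (hgdiff : ∀ x, HasGradientAt g (gradg x) x)
    (hglip : LipschitzWith (1 / β).toNNReal gradg)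
    (hh : ∀ x, h x = g (PV x))
    (hgradh : ∀ x, gradh x = PV (gradg (PV x)))
    (hgradhlip : LipschitzWith (1 / βV).toNNReal gradh)
    (hprox : ∀ x, IsMinOn (fun y => f y + (1 / (2 * γ)) * ‖y - x‖ ^ 2) Set.univ (proxf x))
    (T : H → H)
    (hT : ∀ z, T z = (1 / 2 : ℝ) • (z - γ • gradh z)
        + (1 / 2 : ℝ) • ((2 : ℝ) • proxf ((2 : ℝ) • PV (z - γ • gradh z) - (z - γ • gradh z))
            - ((2 : ℝ) • PV (z - γ • gradh z) - (z - γ • gradh z))))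
    -- strong convexity / smoothness constants
    (μf μg βf : ℝ) (hμf : 0 ≤ μf) (hμg : 0 ≤ μg) (hβf : 0 ≤ βf)
    (hfstrong : StrongConvexOn Set.univ μf f)
    (hgstrong : StrongConvexOn Set.univ μg g)
    (hfgrad : 0 < βf → ∀ x, HasGradientAt f (gradf x) x)
    (hfgradlip : 0 < βf → LipschitzWith (1 / βf).toNNReal gradf)
    (Sf Sh : H → H → ℝ)
    (hSf : ∀ x y, Sf x y = if 0 < βf then
        max (μf / 2 * ‖x - y‖ ^ 2) (βf / 2 * ‖gradf x - gradf y‖ ^ 2)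
      else μf / 2 * ‖x - y‖ ^ 2)
    (hSh : ∀ x y, Sh x y
        = max (μg / 2 * ‖PV x - PV y‖ ^ 2) (βV / 2 * ‖gradh x - gradh y‖ ^ 2))
    -- the points associated with a given z ∈ H and λ > 0
    (z zp xh xf : H) (lam : ℝ) (hlam : 0 < lam)
    (hzp : zp = (1 - lam) • z + lam • T z)
    (hxh : xh = PV z)
    (hxf : xf = proxf ((2 : ℝ) • PV (z - γ • gradh z) - (z - γ • gradh z))) :
    ∀ x : H, x ∈ V →
      2 * γ * lam * (f xf + h xh - f x - h x + Sf xf x + Sh xh x)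
        ≤ ‖z - x‖ ^ 2 - ‖zp - x‖ ^ 2 + (1 - 2 / lam) * ‖zp - z‖ ^ 2
          + 2 * γ * ⟪gradh xh, z - zp⟫ := by
  intro x hx
  -- basic facts about the projection
  have hPVL : ∀ y, PV y = (V.subtypeL.comp (V.orthogonalProjection)) y := by
    intro y; rw [hPV]; rfl
  have hPVmem : ∀ y, PV y ∈ V := by
    intro y; rw [hPV]; exact (V.orthogonalProjection y).2
  have hPVidem : ∀ y, y ∈ V → PV y = y := by
    intro y hy; rw [hPV]
    exact V.starProjection_eq_self_iff.mpr hy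
  have hselfadj : ∀ a b : H, ⟪PV a, b⟫ = ⟪a, PV b⟫ := by
    intro a b; rw [hPV, hPV]; exact V.inner_starProjection_left_eq_right a b
  have hPVlin : ∀ (a b : H) (c : ℝ), PV (a - c • b) = PV a - c • PV b := by
    intro a b c
    rw [hPVL, hPVL, hPVL, map_sub, map_smul]
  have hxhV : xh ∈ V := hxh ▸ hPVmem z
  have hghV : gradh z ∈ V := by rw [hgradh]; exact hPVmem _
  have hgh_eq : gradh xh = gradh z := by
    rw [hgradh, hgradh, hxh, hPVidem _ (hPVmem z)]
  have hPVw : PV (z - γ • gradh z) = xh - γ • gradh xh := by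
    rw [hPVlin, ← hxh, hPVidem _ hghV, hgh_eq]
  set Rr : H := (2:ℝ) • xh - z - γ • gradh xh with hRr
  have hrr_eq : (2:ℝ) • PV (z - γ • gradh z) - (z - γ • gradh z) = Rr := by
    rw [hPVw, hRr, hgh_eq]; module
  set u : H := γ⁻¹ • (Rr - xf) with hu
  have hgu : γ • u = Rr - xf := by
    rw [hu, smul_smul, mul_inv_cancel₀ hγ.ne', one_smul]
  have hTz : T z - z = xf - xh := by
    rw [hT z, ← hxf, hrr_eq, hRr, ← hgh_eq]; module
  have hzp2 : zp = z + lam • (xf - xh) := by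
    have h1 : T z = xf - xh + z := sub_eq_iff_eq_add.mp hTz
    rw [hzp, h1]; module
  -- the two fundamental inequalities
  have hxf2 : xf = proxf Rr := by rw [hxf, hrr_eq]
  have hxf' : IsMinOn (fun y => f y + 1 / (2 * γ) * ‖y - Rr‖ ^ 2) Set.univ xf := by
    have h0 := hprox ((2:ℝ) • PV (z - γ • gradh z) - (z - γ • gradh z))
    rw [hrr_eq] at h0
    rw [← hxf2] at h0
    exact h0
  have Ineq1 : f xf - f x + Sf xf x ≤ ⟪u, xf - x⟫ := by
    by_cases hbf : 0 < βf
    · have hgradzero : gradf xf = u := by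
        have hloc : IsLocalMin (fun y => f y + 1 / (2 * γ) * ‖y - Rr‖ ^ 2) xf :=
          hxf'.isLocalMin Filter.univ_mem
        have hgr : HasGradientAt (fun y => f y + 1 / (2 * γ) * ‖y - Rr‖ ^ 2)
            (gradf xf + (2 * (1 / (2 * γ))) • (xf - Rr)) xf :=
          aux_grad_add (hfgrad hbf xf) (aux_grad_normsq (1 / (2 * γ)) Rr xf)
        have h0 := hloc.hasFDerivAt_eq_zero (hasGradientAt_iff_hasFDerivAt.mp hgr)
        have h1 : gradf xf + (2 * (1 / (2 * γ))) • (xf - Rr) = 0 :=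
          (toDual ℝ H).injective (h0.trans (map_zero _).symm)
        have hc : (2 * (1 / (2 * γ))) = γ⁻¹ := by field_simp
        rw [hc] at h1
        have h2 : gradf xf = -(γ⁻¹ • (xf - Rr)) := eq_neg_of_add_eq_zero_left h1
        rw [hu, h2, ← smul_neg, neg_sub]
      have e4 : ⟪gradf xf, x - xf⟫ = -⟪u, xf - x⟫ := by
        rw [hgradzero, show x - xf = -(xf - x) by abel, inner_neg_right]
      have hμ : f xf - f x + μf / 2 * ‖xf - x‖ ^ 2 ≤ ⟪u, xf - x⟫ := by
        have hs := aux_strong_convex_lower hfstrong (hfgrad hbf xf) x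
        rw [e4] at hs
        rw [show ‖xf - x‖ = ‖x - xf‖ from norm_sub_rev _ _]
        linarith
      have hβ2 : f xf - f x + βf / 2 * ‖gradf xf - gradf x‖ ^ 2 ≤ ⟪u, xf - x⟫ := by
        have hs := aux_smooth_convex_lower hbf hfconv (hfgrad hbf) (hfgradlip hbf) x xf
        rw [e4] at hs
        rw [show ‖gradf xf - gradf x‖ = ‖gradf x - gradf xf‖ from norm_sub_rev _ _]
        linarith
      rw [hSf, if_pos hbf]
      have h3 : max (μf / 2 * ‖xf - x‖ ^ 2) (βf / 2 * ‖gradf xf - gradf x‖ ^ 2)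
          ≤ ⟪u, xf - x⟫ - (f xf - f x) := max_le (by linarith) (by linarith)
      linarith
    · rw [hSf, if_neg hbf]
      have hstrongφ := aux_prox_strong hγ hfstrong Rr
      have hgrow := aux_strong_min hstrongφ hxf' x
      have e1 : ‖x - Rr‖ ^ 2 = ‖x - xf‖ ^ 2 + 2 * ⟪x - xf, xf - Rr⟫ + ‖xf - Rr‖ ^ 2 := by
        rw [show x - Rr = (x - xf) + (xf - Rr) by abel, norm_add_sq_real]
      have e2 : ⟪x - xf, xf - Rr⟫ = γ * ⟪u, xf - x⟫ := by
        have ha : (x - xf : H) = -(xf - x) := by abel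
        have hb' : (xf - Rr : H) = -(Rr - xf) := by abel
        rw [ha, hb', inner_neg_neg, real_inner_comm, ← hgu, real_inner_smul_left]
      have expand : 1 / (2 * γ) * ‖x - Rr‖ ^ 2
          = 1 / (2 * γ) * ‖x - xf‖ ^ 2 + ⟪u, xf - x⟫ + 1 / (2 * γ) * ‖xf - Rr‖ ^ 2 := by
        rw [e1, e2]; field_simp
      have expand2 : (μf + 1 / γ) / 2 * ‖x - xf‖ ^ 2
          = μf / 2 * ‖x - xf‖ ^ 2 + 1 / (2 * γ) * ‖x - xf‖ ^ 2 := by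
        field_simp
      rw [expand, expand2] at hgrow
      rw [show ‖xf - x‖ = ‖x - xf‖ from norm_sub_rev _ _]
      linarith
  have hconvh : ConvexOn ℝ Set.univ h := by
    refine ⟨convex_univ, ?_⟩
    intro p _ q _ a b ha hb hab
    have hP : PV (a • p + b • q) = a • PV p + b • PV q := by
      rw [hPVL, hPVL, hPVL, map_add, map_smul, map_smul]
    rw [hh, hh, hh, hP]
    exact hgconv.2 (Set.mem_univ (PV p)) (Set.mem_univ (PV q)) ha hb hab
  have hdiffh : ∀ y, HasGradientAt h (gradh y) y := by
    intro y
    have hg1 : HasFDerivAt g (toDual ℝ H (gradg ((V.subtypeL.comp (V.orthogonalProjection)) y)))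
        ((V.subtypeL.comp (V.orthogonalProjection)) y) :=
      hasGradientAt_iff_hasFDerivAt.mp (hgdiff _)
    have hcomp : HasFDerivAt (fun w => g ((V.subtypeL.comp (V.orthogonalProjection)) w))
        ((toDual ℝ H (gradg ((V.subtypeL.comp (V.orthogonalProjection)) y))).comp
          (V.subtypeL.comp (V.orthogonalProjection))) y := by
      have := hg1.comp y (V.subtypeL.comp (V.orthogonalProjection)).hasFDerivAt
      exact this
    have heqf : h = fun w => g ((V.subtypeL.comp (V.orthogonalProjection)) w) :=
      funext fun w => by rw [hh, hPVL]
    have hclm : (toDual ℝ H (gradh y))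
        = (toDual ℝ H (gradg ((V.subtypeL.comp (V.orthogonalProjection)) y))).comp
          (V.subtypeL.comp (V.orthogonalProjection)) := by
      apply ContinuousLinearMap.ext
      intro v
      simp only [ContinuousLinearMap.comp_apply, toDual_apply_apply]
      calc ⟪gradh y, v⟫ = ⟪PV (gradg (PV y)), v⟫ := by rw [hgradh]
        _ = ⟪gradg (PV y), PV v⟫ := hselfadj _ _
        _ = ⟪gradg ((V.subtypeL.comp (V.orthogonalProjection)) y),
              (V.subtypeL.comp (V.orthogonalProjection)) v⟫ := by rw [← hPVL, ← hPVL]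
    rw [hasGradientAt_iff_hasFDerivAt, heqf, hclm]
    exact hcomp
  have Ineq2 : h xh - h x + Sh xh x ≤ ⟪gradh xh, xh - x⟫ := by
    have e4 : ⟪gradh xh, x - xh⟫ = -⟪gradh xh, xh - x⟫ := by
      rw [show x - xh = -(xh - x) by abel, inner_neg_right]
    have hb1 : h xh - h x + μg / 2 * ‖PV xh - PV x‖ ^ 2 ≤ ⟪gradh xh, xh - x⟫ := by
      have hsg := aux_strong_convex_lower hgstrong (hgdiff (PV xh)) (PV x)
      have hid : ⟪gradg (PV xh), PV x - PV xh⟫ = ⟪gradh xh, x - xh⟫ := by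
        have h1 : PV x - PV xh = PV (x - xh) := by
          rw [hPVL x, hPVL xh, hPVL (x - xh), map_sub]
        rw [h1, ← hselfadj (gradg (PV xh)) (x - xh), ← hgradh]
      rw [hid, e4] at hsg
      rw [show ‖PV xh - PV x‖ = ‖PV x - PV xh‖ from norm_sub_rev _ _]
      rw [hh xh, hh x]
      linarith
    have hb2 : h xh - h x + βV / 2 * ‖gradh xh - gradh x‖ ^ 2 ≤ ⟪gradh xh, xh - x⟫ := by
      have hsm := aux_smooth_convex_lower hβV hconvh hdiffh hgradhlip x xh
      rw [e4] at hsm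
      rw [show ‖gradh xh - gradh x‖ = ‖gradh x - gradh xh‖ from norm_sub_rev _ _]
      linarith
    rw [hSh]
    have h3 : max (μg / 2 * ‖PV xh - PV x‖ ^ 2) (βV / 2 * ‖gradh xh - gradh x‖ ^ 2)
        ≤ ⟪gradh xh, xh - x⟫ - (h xh - h x) := max_le (by linarith) (by linarith)
    linarith
  -- orthogonality
  have hperp : ⟪xh - z, xh - x⟫ = 0 := by
    have hzv : z - xh ∈ Vᗮ := by
      rw [hxh, hPV]; exact V.sub_starProjection_mem_orthogonal z
    have hmem : xh - x ∈ V := V.sub_mem hxhV hx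
    have h0 : ⟪xh - x, z - xh⟫ = 0 := hzv (xh - x) hmem
    have h1 : ⟪xh - z, xh - x⟫ = -⟪z - xh, xh - x⟫ := by
      rw [show xh - z = -(z - xh) by abel, inner_neg_left]
    have h2 : ⟪z - xh, xh - x⟫ = ⟪xh - x, z - xh⟫ := real_inner_comm (xh - x) (z - xh)
    rw [h1, h2, h0, neg_zero]
  -- the key algebraic identity
  have keyid : ‖z - x‖ ^ 2 - ‖zp - x‖ ^ 2 + (1 - 2 / lam) * ‖zp - z‖ ^ 2
      + 2 * γ * ⟪gradh xh, z - zp⟫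
      = 2 * γ * lam * (⟪u, xf - x⟫ + ⟪gradh xh, xh - x⟫)
        - 2 * lam * ⟪xh - z, xh - x⟫ := by
    have hA : ‖zp - x‖ ^ 2 = ‖z - x‖ ^ 2 + 2 * (lam * ⟪z - x, xf - xh⟫)
        + lam ^ 2 * ‖xf - xh‖ ^ 2 := by
      rw [hzp2, show z + lam • (xf - xh) - x = (z - x) + lam • (xf - xh) by abel,
        norm_add_sq_real, real_inner_smul_right, norm_smul, Real.norm_eq_abs, mul_pow, sq_abs]
    have hB : ‖zp - z‖ ^ 2 = lam ^ 2 * ‖xf - xh‖ ^ 2 := by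
      rw [hzp2, show z + lam • (xf - xh) - z = lam • (xf - xh) by abel,
        norm_smul, Real.norm_eq_abs, mul_pow, sq_abs]
    have hC2 : ⟪gradh xh, z - zp⟫ = -(lam * ⟪gradh xh, xf - xh⟫) := by
      rw [hzp2, show z - (z + lam • (xf - xh)) = -(lam • (xf - xh)) by abel,
        inner_neg_right, real_inner_smul_right]
    have hgi : γ * ⟪u, xf - x⟫ = ⟪(2:ℝ) • xh - z - γ • gradh xh - xf, xf - x⟫ := by
      rw [← real_inner_smul_left, hgu, hRr]
    have hmul : 2 * γ * lam * (⟪u, xf - x⟫ + ⟪gradh xh, xh - x⟫)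
        = 2 * lam * (⟪(2:ℝ) • xh - z - γ • gradh xh - xf, xf - x⟫
            + γ * ⟪gradh xh, xh - x⟫) := by
      rw [← hgi]; ring
    rw [hA, hB, hC2, hmul]
    have hnorm : ‖xf - xh‖ ^ 2 = ⟪xf - xh, xf - xh⟫ := (real_inner_self_eq_norm_sq _).symm
    rw [hnorm]
    simp only [inner_sub_left, inner_sub_right, real_inner_smul_left, real_inner_smul_right]
    simp only [real_inner_comm z x, real_inner_comm z xh, real_inner_comm z xf,
      real_inner_comm xh x, real_inner_comm xf x, real_inner_comm xh xf]
    field_simp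
    ring
  -- conclusion
  have hpos : (0:ℝ) ≤ 2 * γ * lam := by positivity
  have hsum : f xf + h xh - f x - h x + Sf xf x + Sh xh x
      ≤ ⟪u, xf - x⟫ + ⟪gradh xh, xh - x⟫ := by linarith [Ineq1, Ineq2]
  calc 2 * γ * lam * (f xf + h xh - f x - h x + Sf xf x + Sh xh x)
      ≤ 2 * γ * lam * (⟪u, xf - x⟫ + ⟪gradh xh, xh - x⟫) :=
        mul_le_mul_of_nonneg_left hsum hpos
    _ = ‖z - x‖ ^ 2 - ‖zp - x‖ ^ 2 + (1 - 2 / lam) * ‖zp - z‖ ^ 2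
        + 2 * γ * ⟪gradh xh, z - zp⟫ := by
        rw [keyid, hperp]; ring
end
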